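/- arXiv:0804.2097 — 3 statements merged into one kernel-verified Lean document; each statement's English description precedes it below -/
import Mathlib

section
/- For valuations v₁ ≥ ⋯ ≥ vₙ ≥ 0, a subset T of agents, a threshold index ℓ, price v_{ℓ+1} (with v_{n+1}=0), and d_i = v_i − v_{i+1}, the residual surplus W(T, v_{ℓ+1}) of the k-unit v_{ℓ+1}-lottery on T satisfies W(T, v_{ℓ+1}) = (min(k, n^T_ℓ)/n^T_ℓ) · Σ_{i=1}^{ℓ} n^T_i · d_i, where n^T_i = |T ∩ {1,…,i}|. -/
open Finset

lemma telescope_Icc (v : ℕ → ℝ) (j ℓ : ℕ) (hj : j ≤ ℓ) :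
    ∑ i ∈ Finset.Icc j ℓ, (v i - v (i + 1)) = v j - v (ℓ + 1) := by
  induction ℓ with
  | zero =>
    interval_cases j
    simp
  | succ m ih =>
    rcases Nat.lt_or_ge j (m + 1) with h | h
    · rw [Finset.sum_Icc_succ_top (by omega), ih (Nat.lt_succ_iff.mp h)]
      ring
    · have : j = m + 1 := le_antisymm hj h
      subst this
      simp

lemma abel_key (ℓ : ℕ) (v : ℕ → ℝ) (T : Finset ℕ) :
    ∑ i ∈ Finset.Icc 1 ℓ, ((T ∩ Finset.Icc 1 i).card : ℝ) * (v i - v (i + 1))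
      = ∑ j ∈ T ∩ Finset.Icc 1 ℓ, (v j - v (ℓ + 1)) := by
  have hcard : ∀ i ∈ Finset.Icc 1 ℓ,
      ((T ∩ Finset.Icc 1 i).card : ℝ)
        = ∑ j ∈ T ∩ Finset.Icc 1 ℓ, (if j ≤ i then (1 : ℝ) else 0) := by
    intro i hi
    have hset : (T ∩ Finset.Icc 1 ℓ).filter (· ≤ i) = T ∩ Finset.Icc 1 i := by
      ext j
      simp only [Finset.mem_filter, Finset.mem_inter, Finset.mem_Icc]
      constructor
      · rintro ⟨⟨hj, h1, _⟩, hji⟩; exact ⟨hj, h1, hji⟩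
      · rintro ⟨hj, h1, hji⟩
        exact ⟨⟨hj, h1, hji.trans (Finset.mem_Icc.mp hi).2⟩, hji⟩
    rw [← Finset.sum_filter, hset]
    simp
  calc ∑ i ∈ Finset.Icc 1 ℓ, ((T ∩ Finset.Icc 1 i).card : ℝ) * (v i - v (i + 1))
      = ∑ i ∈ Finset.Icc 1 ℓ, ∑ j ∈ T ∩ Finset.Icc 1 ℓ,
          (if j ≤ i then v i - v (i + 1) else 0) := by
        refine Finset.sum_congr rfl fun i hi => ?_
        rw [hcard i hi, Finset.sum_mul]
        refine Finset.sum_congr rfl fun j _ => ?_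
        by_cases h : j ≤ i <;> simp [h]
    _ = ∑ j ∈ T ∩ Finset.Icc 1 ℓ, ∑ i ∈ Finset.Icc 1 ℓ,
          (if j ≤ i then v i - v (i + 1) else 0) := Finset.sum_comm
    _ = ∑ j ∈ T ∩ Finset.Icc 1 ℓ, (v j - v (ℓ + 1)) := by
        refine Finset.sum_congr rfl fun j hj => ?_
        have hj' : j ∈ Finset.Icc 1 ℓ := (Finset.mem_inter.mp hj).2
        obtain ⟨hj1, hjℓ⟩ := Finset.mem_Icc.mp hj'
        rw [← Finset.sum_filter]
        have hset : (Finset.Icc 1 ℓ).filter (j ≤ ·) = Finset.Icc j ℓ := by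
          ext x
          simp only [Finset.mem_filter, Finset.mem_Icc]
          omega
        rw [hset, telescope_Icc v j ℓ hjℓ]

/-- For sorted valuations with `d i = v i - v (i+1)` and
`n^T_i = |T ∩ {1,…,i}|`, the residual surplus of the `k`-unit
`v_{ℓ+1}`-lottery on `T` equals
`(min(k, n^T_ℓ)/n^T_ℓ) · Σ_{i=1}^{ℓ} n^T_i · d_i`. -/
theorem lottery_surplus_identity (n k ℓ : ℕ) (v : ℕ → ℝ) (T : Finset ℕ)
    (hT : T ⊆ Finset.Icc 1 n) (hℓ : ℓ ≤ n)
    (hsort : ∀ i, v (i + 1) ≤ v i) (hnn : ∀ i, 0 ≤ v i) (hend : v (n + 1) = 0)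
    (hcard : 1 ≤ (T ∩ Finset.Icc 1 ℓ).card) :
    ((min k (T ∩ Finset.Icc 1 ℓ).card : ℕ) : ℝ) / ((T ∩ Finset.Icc 1 ℓ).card : ℝ) *
        (∑ i ∈ T ∩ Finset.Icc 1 ℓ, v i)
      - ((min k (T ∩ Finset.Icc 1 ℓ).card : ℕ) : ℝ) * v (ℓ + 1)
    = ((min k (T ∩ Finset.Icc 1 ℓ).card : ℕ) : ℝ) / ((T ∩ Finset.Icc 1 ℓ).card : ℝ) *
        ∑ i ∈ Finset.Icc 1 ℓ, ((T ∩ Finset.Icc 1 i).card : ℝ) * (v i - v (i + 1)) := by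
  set S := T ∩ Finset.Icc 1 ℓ with hS
  have hm : (0 : ℝ) < (S.card : ℝ) := by exact_mod_cast hcard
  rw [abel_key ℓ v T, ← hS, Finset.sum_sub_distrib, Finset.sum_const, nsmul_eq_mul]
  field_simp
end

section
/- For two i.i.d. standard exponential valuations v₁ ≥ v₂, the expected value of G(v₁,v₂) = max{(v₁+v₂)/2, v₁ − v₂/2} equals 4/3. -/
open MeasureTheory Set Filter Real Topology

/-- Derivative of the antiderivative of `(p + q*y) * (c * exp (-y))`. -/
lemma hasDerivAt_aux (p q c y : ℝ) :
    HasDerivAt (fun y : ℝ => -(p + q + q * y) * Real.exp (-y) * c)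
      ((p + q * y) * (c * Real.exp (-y))) y := by
  have hexp : HasDerivAt (fun y : ℝ => Real.exp (-y)) (-Real.exp (-y)) y := by
    simpa [Function.comp_def] using (Real.hasDerivAt_exp (-y)).comp y (hasDerivAt_neg y)
  have hlin : HasDerivAt (fun y : ℝ => -(p + q + q * y)) (-q) y := by
    have h1 : HasDerivAt (fun y : ℝ => p + q + q * y) q y := by
      simpa using ((hasDerivAt_id y).const_mul q).const_add (p + q)
    exact h1.neg
  have h := (hlin.mul hexp).mul_const c
  exact h.congr_deriv (by ring)

lemma tendsto_aux (p q : ℝ) :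
    Tendsto (fun y : ℝ => -(p + q + q * y) * Real.exp (-y)) atTop (𝓝 0) := by
  have h1 := Real.tendsto_pow_mul_exp_neg_atTop_nhds_zero 1
  have h2 := Real.tendsto_exp_neg_atTop_nhds_zero
  have h := (h1.const_mul (-q)).add (h2.const_mul (-(p + q)))
  simp only [mul_zero, add_zero] at h
  refine h.congr fun y => by ring

/-- Tail integral. -/
lemma tail_int (x : ℝ) (hx : 0 < x) :
    ∫ y in Set.Ioi (2 * x), (y - x / 2) * (Real.exp (-x) * Real.exp (-y))
      = (3 * x / 2 + 1) * Real.exp (-x) * Real.exp (-(2 * x)) := by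
  have hderiv : ∀ y ∈ Set.Ici (2 * x),
      HasDerivAt (fun y : ℝ => -(-(x / 2) + 1 + 1 * y) * Real.exp (-y) * Real.exp (-x))
        ((y - x / 2) * (Real.exp (-x) * Real.exp (-y))) y := by
    intro y _
    have h := hasDerivAt_aux (-(x / 2)) 1 (Real.exp (-x)) y
    have he : (-(x / 2) + 1 * y) * (Real.exp (-x) * Real.exp (-y))
        = (y - x / 2) * (Real.exp (-x) * Real.exp (-y)) := by ring
    rwa [he] at h
  have hpos : ∀ y ∈ Set.Ioi (2 * x),
      0 ≤ (y - x / 2) * (Real.exp (-x) * Real.exp (-y)) := by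
    intro y hy
    have : (0:ℝ) ≤ y - x / 2 := by simp only [Set.mem_Ioi] at hy; linarith
    positivity
  have htend : Tendsto (fun y : ℝ => -(-(x / 2) + 1 + 1 * y) * Real.exp (-y) * Real.exp (-x))
      atTop (𝓝 0) := by
    have := (tendsto_aux (-(x / 2)) 1).mul_const (Real.exp (-x))
    simpa using this
  have := integral_Ioi_of_hasDerivAt_of_nonneg' hderiv hpos htend
  rw [this]
  ring

lemma tail_integrable (x : ℝ) (hx : 0 < x) :
    IntegrableOn (fun y => (y - x / 2) * (Real.exp (-x) * Real.exp (-y)))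
      (Set.Ioi (2 * x)) := by
  have hderiv : ∀ y ∈ Set.Ici (2 * x),
      HasDerivAt (fun y : ℝ => -(-(x / 2) + 1 + 1 * y) * Real.exp (-y) * Real.exp (-x))
        ((y - x / 2) * (Real.exp (-x) * Real.exp (-y))) y := by
    intro y _
    have h := hasDerivAt_aux (-(x / 2)) 1 (Real.exp (-x)) y
    have he : (-(x / 2) + 1 * y) * (Real.exp (-x) * Real.exp (-y))
        = (y - x / 2) * (Real.exp (-x) * Real.exp (-y)) := by ring
    rwa [he] at h
  have hpos : ∀ y ∈ Set.Ioi (2 * x),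
      0 ≤ (y - x / 2) * (Real.exp (-x) * Real.exp (-y)) := by
    intro y hy
    have : (0:ℝ) ≤ y - x / 2 := by simp only [Set.mem_Ioi] at hy; linarith
    positivity
  have htend : Tendsto (fun y : ℝ => -(-(x / 2) + 1 + 1 * y) * Real.exp (-y) * Real.exp (-x))
      atTop (𝓝 0) := by
    have := (tendsto_aux (-(x / 2)) 1).mul_const (Real.exp (-x))
    simpa using this
  exact integrableOn_Ioi_deriv_of_nonneg' hderiv hpos htend

/-- Inner integral computation. -/
lemma inner_int (x : ℝ) (hx : 0 < x) :
    (∫ y in Set.Ioi (0:ℝ),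
        (max ((max x y + min x y) / 2) (max x y - min x y / 2)) *
          (Real.exp (-x) * Real.exp (-y)))
      = (x - 1 / 2 + Real.exp (-(x / 2)) + Real.exp (-(2 * x)) / 2) * Real.exp (-x) := by
  set f : ℝ → ℝ := fun y =>
    (max ((max x y + min x y) / 2) (max x y - min x y / 2)) *
      (Real.exp (-x) * Real.exp (-y)) with hf
  have hcont : Continuous f := by
    apply Continuous.mul
    · exact (((continuous_const.max continuous_id).add
        (continuous_const.min continuous_id)).div_const 2).max
        ((continuous_const.max continuous_id).sub
          ((continuous_const.min continuous_id).div_const 2))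
    · exact continuous_const.mul (Real.continuous_exp.comp continuous_neg)
  have h2x : (0:ℝ) ≤ 2 * x := by linarith
  -- equality on the tail
  have htailEq : Set.EqOn (fun y => (y - x / 2) * (Real.exp (-x) * Real.exp (-y))) f
      (Set.Ioi (2 * x)) := by
    intro y hy
    simp only [Set.mem_Ioi] at hy
    have hxy : x ≤ y := by linarith
    simp only [hf]
    rw [max_eq_right hxy, min_eq_left hxy, max_eq_right (by linarith : (y + x) / 2 ≤ y - x / 2)]
  have hint2 : IntegrableOn f (Set.Ioi (2 * x)) :=
    (tail_integrable x hx).congr_fun htailEq measurableSet_Ioi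
  rw [← Set.Ioc_union_Ioi_eq_Ioi h2x,
    setIntegral_union (Set.Ioc_disjoint_Ioi le_rfl) measurableSet_Ioi
      hcont.integrableOn_Ioc hint2]
  have htail : ∫ y in Set.Ioi (2 * x), f y
      = (3 * x / 2 + 1) * Real.exp (-x) * Real.exp (-(2 * x)) := by
    rw [← setIntegral_congr_fun measurableSet_Ioi htailEq]
    exact tail_int x hx
  -- the bounded part as interval integrals
  have hIoc : ∫ y in Set.Ioc (0:ℝ) (2 * x), f y = ∫ y in (0:ℝ)..(2 * x), f y := by
    rw [intervalIntegral.integral_of_le h2x]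
  rw [hIoc, htail,
    ← intervalIntegral.integral_add_adjacent_intervals
      (a := (0:ℝ)) (b := x / 2) (c := 2 * x)
      (hcont.intervalIntegrable _ _) (hcont.intervalIntegrable _ _)]
  have hp1 : ∫ y in (0:ℝ)..(x / 2), f y
      = -(x + -(1/2) + -(1/2) * (x/2)) * Real.exp (-(x/2)) * Real.exp (-x)
        - -(x + -(1/2) + -(1/2) * 0) * Real.exp (-(0:ℝ)) * Real.exp (-x) := by
    have hEq : Set.EqOn f (fun y => (x + -(1/2) * y) * (Real.exp (-x) * Real.exp (-y)))
        (Set.uIcc (0:ℝ) (x / 2)) := by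
      intro y hy
      rw [Set.uIcc_of_le (by linarith : (0:ℝ) ≤ x / 2)] at hy
      obtain ⟨hy0, hy1⟩ := hy
      simp only [hf]
      rw [max_eq_left (by linarith : y ≤ x), min_eq_right (by linarith : y ≤ x),
        max_eq_right (by linarith : (x + y) / 2 ≤ x - y / 2)]
      ring
    rw [intervalIntegral.integral_congr hEq]
    exact intervalIntegral.integral_eq_sub_of_hasDerivAt
      (fun t _ => hasDerivAt_aux x (-(1/2)) (Real.exp (-x)) t)
      (by apply Continuous.intervalIntegrable; fun_prop)
  have hp2 : ∫ y in (x / 2)..(2 * x), f y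
      = -(x/2 + 1/2 + 1/2 * (2*x)) * Real.exp (-(2*x)) * Real.exp (-x)
        - -(x/2 + 1/2 + 1/2 * (x/2)) * Real.exp (-(x/2)) * Real.exp (-x) := by
    have hEq : Set.EqOn f (fun y => (x/2 + 1/2 * y) * (Real.exp (-x) * Real.exp (-y)))
        (Set.uIcc (x / 2) (2 * x)) := by
      intro y hy
      rw [Set.uIcc_of_le (by linarith : x / 2 ≤ 2 * x)] at hy
      obtain ⟨hy0, hy1⟩ := hy
      simp only [hf]
      rcases le_total y x with hxy | hxy
      · rw [max_eq_left hxy, min_eq_right hxy,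
          max_eq_left (by linarith : x - y / 2 ≤ (x + y) / 2)]
        ring
      · rw [max_eq_right hxy, min_eq_left hxy,
          max_eq_left (by linarith : y - x / 2 ≤ (y + x) / 2)]
        ring
    rw [intervalIntegral.integral_congr hEq]
    exact intervalIntegral.integral_eq_sub_of_hasDerivAt
      (fun t _ => hasDerivAt_aux (x/2) (1/2) (Real.exp (-x)) t)
      (by apply Continuous.intervalIntegrable; fun_prop)
  rw [hp1, hp2]
  rw [show (-(0:ℝ)) = 0 by ring, Real.exp_zero]
  ring

/-- For two i.i.d. standard exponential valuations `v₁ ≥ v₂`, the expectation of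
`G(v₁,v₂) = max{(v₁+v₂)/2, v₁ - v₂/2}` equals `4/3`. -/
theorem expected_benchmark_exponential :
    (∫ x in Set.Ioi (0:ℝ), ∫ y in Set.Ioi (0:ℝ),
        (max ((max x y + min x y) / 2) (max x y - min x y / 2)) *
          (Real.exp (-x) * Real.exp (-y)))
      = 4 / 3 := by
  have hcongr : ∀ x ∈ Set.Ioi (0:ℝ),
      (∫ y in Set.Ioi (0:ℝ),
        (max ((max x y + min x y) / 2) (max x y - min x y / 2)) *
          (Real.exp (-x) * Real.exp (-y)))
      = (x - 1 / 2 + Real.exp (-(x / 2)) + Real.exp (-(2 * x)) / 2) * Real.exp (-x) :=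
    fun x hx => inner_int x hx
  rw [setIntegral_congr_fun measurableSet_Ioi hcongr]
  -- antiderivative
  have hderiv : ∀ x ∈ Set.Ici (0:ℝ),
      HasDerivAt (fun x : ℝ => -(x + 1/2) * Real.exp (-x) - (2/3) * Real.exp (-(3*x/2))
          - (1/6) * Real.exp (-(3*x)))
        ((x - 1 / 2 + Real.exp (-(x / 2)) + Real.exp (-(2 * x)) / 2) * Real.exp (-x)) x := by
    intro x _
    have h1 : HasDerivAt (fun x : ℝ => -(x + 1/2) * Real.exp (-x))
        ((x - 1/2) * Real.exp (-x)) x := by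
      have hexp : HasDerivAt (fun x : ℝ => Real.exp (-x)) (-Real.exp (-x)) x := by
        simpa [Function.comp_def] using (Real.hasDerivAt_exp (-x)).comp x (hasDerivAt_neg x)
      have hlin : HasDerivAt (fun x : ℝ => -(x + 1/2)) (-1) x := by
        exact ((hasDerivAt_id x).add_const (1/2 : ℝ)).neg
      have := hlin.mul hexp
      exact this.congr_deriv (by ring)
    have h2 : HasDerivAt (fun x : ℝ => -(2/3) * Real.exp (-(3*x/2)))
        (Real.exp (-(3*x/2))) x := by
      have harg : HasDerivAt (fun x : ℝ => -(3*x/2)) (-(3/2)) x := by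
        have h0 : HasDerivAt (fun x : ℝ => 3*x/2) (3/2) x := by
          simpa using ((hasDerivAt_id x).const_mul (3 : ℝ)).div_const 2
        exact h0.neg
      have h := harg.exp.const_mul (-(2/3) : ℝ)
      exact h.congr_deriv (by ring)
    have h3 : HasDerivAt (fun x : ℝ => -(1/6) * Real.exp (-(3*x)))
        (Real.exp (-(3*x)) / 2) x := by
      have harg : HasDerivAt (fun x : ℝ => -(3*x)) (-3) x := by
        exact ((hasDerivAt_id x).const_mul (3 : ℝ)).neg.congr_deriv (by ring)
      have h := harg.exp.const_mul (-(1/6) : ℝ)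
      exact h.congr_deriv (by ring)
    have h := (h1.add h2).add h3
    have heq : (x - 1 / 2 + Real.exp (-(x / 2)) + Real.exp (-(2 * x)) / 2) * Real.exp (-x)
        = (x - 1/2) * Real.exp (-x) + Real.exp (-(3*x/2)) + Real.exp (-(3*x)) / 2 := by
      rw [show -(3*x/2) = -(x/2) + -x by ring, show -(3*x) = -(2*x) + -x by ring,
        Real.exp_add, Real.exp_add]
      ring
    rw [heq]
    refine h.congr_of_eventuallyEq (Filter.Eventually.of_forall fun t => ?_)
    simp only [Pi.add_apply]
    ring
  have hpos : ∀ x ∈ Set.Ioi (0:ℝ),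
      0 ≤ (x - 1 / 2 + Real.exp (-(x / 2)) + Real.exp (-(2 * x)) / 2) * Real.exp (-x) := by
    intro x hx
    simp only [Set.mem_Ioi] at hx
    have h1 : -(x/2) + 1 ≤ Real.exp (-(x/2)) := Real.add_one_le_exp (-(x/2))
    have h2 : (0:ℝ) < Real.exp (-(2*x)) := Real.exp_pos _
    have h3 : (0:ℝ) ≤ x - 1 / 2 + Real.exp (-(x / 2)) + Real.exp (-(2 * x)) / 2 := by
      nlinarith
    positivity
  have htend : Tendsto (fun x : ℝ => -(x + 1/2) * Real.exp (-x) - (2/3) * Real.exp (-(3*x/2))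
      - (1/6) * Real.exp (-(3*x))) atTop (𝓝 0) := by
    have h1 := tendsto_aux (1/2 - 1) 1
    have h1' : Tendsto (fun x : ℝ => -(x + 1/2) * Real.exp (-x)) atTop (𝓝 0) := by
      refine h1.congr fun x => by ring
    have hmul : Tendsto (fun x : ℝ => (3/2 : ℝ) * x) atTop atTop :=
      tendsto_id.const_mul_atTop (by norm_num)
    have hmul3 : Tendsto (fun x : ℝ => (3 : ℝ) * x) atTop atTop :=
      tendsto_id.const_mul_atTop (by norm_num)
    have h2' : Tendsto (fun x : ℝ => Real.exp (-(3*x/2))) atTop (𝓝 0) := by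
      rw [Real.tendsto_exp_comp_nhds_zero]
      exact (tendsto_neg_atBot_iff.mpr hmul).congr fun x => by ring
    have h3' : Tendsto (fun x : ℝ => Real.exp (-(3*x))) atTop (𝓝 0) := by
      rw [Real.tendsto_exp_comp_nhds_zero]
      exact tendsto_neg_atBot_iff.mpr hmul3
    have h := (h1'.sub (h2'.const_mul (2/3))).sub (h3'.const_mul (1/6))
    simpa using h
  have := integral_Ioi_of_hasDerivAt_of_nonneg' hderiv hpos htend
  rw [this]
  norm_num [Real.exp_zero]
end

section
/- Let k ≤ n be powers of 2 and v₁ ≥ ⋯ ≥ vₙ ≥ 0. The mechanism that picks j uniformly from {log₂ k, …, log₂ n} and runs a k-unit v_{2^j+1}-lottery (with v_{n+1}=0) has expected residual surplus at least V*/(2(1 + log₂(n/k))), where V* = Σ_{i=1}^k v_i is the full surplus. Hence money-burning mechanisms are O(1 + log(n/k))-surplus maximizers. -/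
open Finset

/-- Picking `j` uniformly from `{a, …, b}` (where `k = 2^a`, `n = 2^b`) and
running a `k`-unit `v_{2^j+1}`-lottery achieves expected residual surplus at
least `V*/(2(1 + log₂(n/k)))`, where `V* = Σ_{i=1}^k v_i` is the full surplus
and `1 + log₂(n/k) = b - a + 1`. Hence money-burning mechanisms are
`O(1 + log(n/k))`-surplus maximizers. -/
theorem money_burning_log_surplus_maximizer (a b : ℕ) (hab : a ≤ b) (v : ℕ → ℝ)
    (hsort : ∀ i, v (i + 1) ≤ v i) (hnn : ∀ i, 0 ≤ v i)
    (hend : v (2 ^ b + 1) = 0) :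
    (∑ i ∈ Finset.Icc 1 (2 ^ a), v i) / (2 * ((b : ℝ) - a + 1))
      ≤ (1 / ((b : ℝ) - a + 1)) *
          ∑ j ∈ Finset.Icc a b,
            ((2 ^ a : ℝ) / (2 ^ j : ℝ)) *
              ∑ i ∈ Finset.Icc 1 (2 ^ j), (v i - v (2 ^ j + 1)) := by
  have mono : ∀ i j : ℕ, i ≤ j → v j ≤ v i := by
    intro i j h
    induction j with
    | zero => simp_all
    | succ m ih =>
      rcases Nat.lt_or_ge i (m + 1) with h' | h'
      · exact (hsort m).trans (ih (Nat.lt_succ_iff.mp h'))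
      · have : i = m + 1 := le_antisymm h h'
        simp [this]
  set V : ℝ := ∑ i ∈ Finset.Icc 1 (2 ^ a), v i with hV
  set k : ℝ := (2 : ℝ) ^ a with hk
  have hkpos : (0 : ℝ) < k := by positivity
  -- single-term computation at j = a
  have base : (k / (2 ^ a : ℝ)) * ∑ i ∈ Finset.Icc 1 (2 ^ a), (v i - v (2 ^ a + 1))
      = V - k * v (2 ^ a + 1) := by
    have hcard : (Finset.Icc 1 (2 ^ a)).card = 2 ^ a := by
      rw [Nat.card_Icc, Nat.add_sub_cancel]
    rw [Finset.sum_sub_distrib, Finset.sum_const, hcard]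
    have : k / (2 ^ a : ℝ) = 1 := by rw [hk]; field_simp
    rw [this, one_mul, hV, hk]
    push_cast
    ring
  -- lower bound for the term at index j (used for j ≥ a + 1)
  have step : ∀ m : ℕ,
      (k / 2) * (v (2 ^ m + 1) - v (2 ^ (m + 1) + 1))
        ≤ (k / (2 ^ (m + 1) : ℝ)) *
            ∑ i ∈ Finset.Icc 1 (2 ^ (m + 1)), (v i - v (2 ^ (m + 1) + 1)) := by
    intro m
    set p : ℝ := v (2 ^ (m + 1) + 1) with hp
    have h1 : (2 ^ m : ℝ) * (v (2 ^ m + 1) - p)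
        ≤ ∑ i ∈ Finset.Icc 1 (2 ^ m), (v i - p) := by
      have := Finset.sum_le_sum (f := fun _ : ℕ => v (2 ^ m + 1) - p)
        (g := fun i : ℕ => v i - p) (s := Finset.Icc 1 (2 ^ m))
        (by
          intro i hi
          have hi' : i ≤ 2 ^ m + 1 := le_trans (Finset.mem_Icc.mp hi).2 (Nat.le_succ _)
          have := mono i (2 ^ m + 1) hi'
          show v (2 ^ m + 1) - p ≤ v i - p
          linarith)
      simp only [Finset.sum_const, Nat.card_Icc, Nat.add_sub_cancel, nsmul_eq_mul, Nat.cast_pow, Nat.cast_ofNat] at this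
      linarith
    have h2 : ∑ i ∈ Finset.Icc 1 (2 ^ m), (v i - p)
        ≤ ∑ i ∈ Finset.Icc 1 (2 ^ (m + 1)), (v i - p) := by
      apply Finset.sum_le_sum_of_subset_of_nonneg
      · apply Finset.Icc_subset_Icc_right
        exact Nat.pow_le_pow_right (by norm_num) (Nat.le_succ m)
      · intro i hi _
        have hi' : i ≤ 2 ^ (m + 1) + 1 :=
          le_trans (Finset.mem_Icc.mp hi).2 (Nat.le_succ _)
        have := mono i (2 ^ (m + 1) + 1) hi'
        show (0:ℝ) ≤ v i - p
        linarith
    have h3 : (2 ^ m : ℝ) * (v (2 ^ m + 1) - p)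
        ≤ ∑ i ∈ Finset.Icc 1 (2 ^ (m + 1)), (v i - p) := le_trans h1 h2
    have hc : (0 : ℝ) < k / (2 ^ (m + 1) : ℝ) := by positivity
    have := mul_le_mul_of_nonneg_left h3 (le_of_lt hc)
    calc (k / 2) * (v (2 ^ m + 1) - p)
        = (k / (2 ^ (m + 1) : ℝ)) * ((2 ^ m : ℝ) * (v (2 ^ m + 1) - p)) := by
          have h2 : (2 : ℝ) ^ (m + 1) = 2 ^ m * 2 := pow_succ 2 m
          have hne : ((2 : ℝ) ^ m) ≠ 0 := by positivity
          rw [h2]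
          field_simp
      _ ≤ (k / (2 ^ (m + 1) : ℝ)) * ∑ i ∈ Finset.Icc 1 (2 ^ (m + 1)), (v i - p) := this
  -- key invariant by induction on the top index
  have key : ∀ c : ℕ, a ≤ c →
      V - (k / 2) * v (2 ^ a + 1) - (k / 2) * v (2 ^ c + 1)
        ≤ ∑ j ∈ Finset.Icc a c,
            (k / (2 ^ j : ℝ)) * ∑ i ∈ Finset.Icc 1 (2 ^ j), (v i - v (2 ^ j + 1)) := by
    intro c hc
    induction c, hc using Nat.le_induction with
    | base =>
      rw [Finset.Icc_self, Finset.sum_singleton, base]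
      exact le_of_eq (by ring)
    | succ m hm ih =>
      rw [Finset.sum_Icc_succ_top (Nat.le_succ_of_le hm)]
      have := step m
      linarith
  have hVk : k * v (2 ^ a + 1) ≤ V := by
    have := Finset.sum_le_sum (f := fun _ : ℕ => v (2 ^ a + 1)) (g := fun i : ℕ => v i)
      (s := Finset.Icc 1 (2 ^ a))
      (by
        intro i hi
        exact mono i (2 ^ a + 1) (le_trans (Finset.mem_Icc.mp hi).2 (Nat.le_succ _)))
    simpa [Finset.sum_const, Nat.card_Icc, mul_comm, hV, hk] using this
  have hS : V / 2
      ≤ ∑ j ∈ Finset.Icc a b,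
          (k / (2 ^ j : ℝ)) * ∑ i ∈ Finset.Icc 1 (2 ^ j), (v i - v (2 ^ j + 1)) := by
    have h := key b hab
    rw [hend] at h
    linarith
  have hd : (0 : ℝ) < (b : ℝ) - a + 1 := by
    have : (a : ℝ) ≤ (b : ℝ) := by exact_mod_cast hab
    linarith
  calc V / (2 * ((b : ℝ) - a + 1))
      = (1 / ((b : ℝ) - a + 1)) * (V / 2) := by
        rw [one_div, inv_mul_eq_div, div_div, mul_comm]
    _ ≤ (1 / ((b : ℝ) - a + 1)) *
          ∑ j ∈ Finset.Icc a b,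
            (k / (2 ^ j : ℝ)) * ∑ i ∈ Finset.Icc 1 (2 ^ j), (v i - v (2 ^ j + 1)) := by
        apply mul_le_mul_of_nonneg_left hS
        positivity
end
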